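/- For S_N ~ NBM(π, p) with π = (f_N(1), f_N(2), ...), the distribution function satisfies F_{S_N}(x) = E(F_N(Z)) for each x ≥ 0, where Z ~ NegBin(x+1, 1-p), i.e., ∑_{k=1}^∞ f_N(k)·NB(k,p)(x) = ∑_{i=0}^∞ F_N(i)·nb(x+1, 1-p)(i). -/

import Mathlib

/-- The negative binomial probability function `nb(k,p)(x) = C(k+x-1,x) p^k (1-p)^x`. -/
noncomputable def nb (k : ℕ) (p : ℝ) (x : ℕ) : ℝ :=
  (Nat.choose (k + x - 1) x : ℝ) * p ^ k * (1 - p) ^ x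

/-- The negative binomial distribution function
`NB(k,p)(x) = 1 - ∑_{i=0}^{k-1} nb(x+1, 1-p)(i)`. -/
noncomputable def NBcdf (k : ℕ) (p : ℝ) (x : ℕ) : ℝ :=
  1 - ∑ i ∈ Finset.range k, nb (x + 1) (1 - p) i

/-- For `S_N ~ NBM(π, p)` with `π = (f 1, f 2, ...)`, the distribution function
satisfies `F_{S_N}(x) = E(F_N(Z))` where `Z ~ NegBin(x+1, 1-p)`, i.e.
`∑_{k≥1} f k · NB(k,p)(x) = ∑_{i≥0} F_N(i) · nb(x+1, 1-p)(i)`, with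
`F_N(i) = ∑_{k=1}^i f k`. -/
theorem nbm_cdf_repr (p : ℝ) (hp0 : 0 < p) (hp1 : p < 1)
    (f : ℕ → ℝ) (hf0 : f 0 = 0) (hf : ∀ k, 0 ≤ f k) (hfsum : ∑' k : ℕ, f k = 1)
    (x : ℕ) :
    ∑' k : ℕ, f k * NBcdf k p x =
      ∑' i : ℕ, (∑ k ∈ Finset.range (i + 1), f k) * nb (x + 1) (1 - p) i := by
  have hq0 : (0:ℝ) < 1 - p := by linarith
  set g : ℕ → ℝ := fun i => nb (x + 1) (1 - p) i with hg_def
  have hgval : ∀ i, g i = (1 - p) ^ (x + 1) * (((i + x).choose x : ℝ) * p ^ i) := by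
    intro i
    simp only [hg_def, nb]
    have h1 : x + 1 + i - 1 = i + x := by omega
    have h2 : (i + x).choose i = (i + x).choose x := by
      have := Nat.choose_symm (Nat.le_add_left x i)
      rwa [show i + x - x = i by omega] at this
    rw [h1, h2, show (1:ℝ) - (1 - p) = p by ring]
    ring
  -- g sums to 1
  have hg : HasSum g 1 := by
    have hr : ‖p‖ < 1 := by rw [Real.norm_eq_abs, abs_of_pos hp0]; exact hp1
    have h := (hasSum_choose_mul_geometric_of_norm_lt_one x hr).mul_left ((1 - p) ^ (x + 1))
    have hval : (1 - p) ^ (x + 1) * (1 / (1 - p) ^ (x + 1)) = 1 := by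
      field_simp
    rw [hval] at h
    refine HasSum.congr_fun h ?_
    intro i
    rw [hgval i]
  have hg_nonneg : ∀ i, 0 ≤ g i := by
    intro i
    rw [hgval i]
    positivity
  -- f is summable
  have hf_summable : Summable f := by
    by_contra h
    rw [tsum_eq_zero_of_not_summable h] at hfsum
    norm_num at hfsum
  -- NBcdf as a tail sum
  have hNB : ∀ k, NBcdf k p x = ∑' i, g (i + k) := by
    intro k
    have h := Summable.sum_add_tsum_nat_add (f := g) k hg.summable
    rw [hg.tsum_eq] at h
    simp only [NBcdf, ← hg_def]
    linarith
  -- the double-sum function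
  set F : ℕ → ℕ → ℝ := fun k i => if k ≤ i then f k * g i else 0 with hF_def
  have hF_nonneg : ∀ k i, 0 ≤ F k i := by
    intro k i
    simp only [hF_def]
    split
    · exact mul_nonneg (hf k) (hg_nonneg i)
    · exact le_rfl
  have hF_le : ∀ z : ℕ × ℕ, F z.1 z.2 ≤ f z.1 * g z.2 := by
    intro z
    simp only [hF_def]
    split
    · exact le_rfl
    · exact mul_nonneg (hf z.1) (hg_nonneg z.2)
  have hFsum : Summable (Function.uncurry F) := by
    refine Summable.of_nonneg_of_le (fun z => hF_nonneg z.1 z.2) (fun z => hF_le z)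
      (hf_summable.mul_of_nonneg hg.summable (fun k => hf k) (fun i => hg_nonneg i))
  have hFk_summable : ∀ k, Summable (fun i => F k i) := fun k =>
    hFsum.prod_factor k
  -- per-k identity
  have hterm : ∀ k, f k * NBcdf k p x = ∑' i, F k i := by
    intro k
    rw [hNB k, ← tsum_mul_left]
    have h := Summable.sum_add_tsum_nat_add (f := fun i => F k i) k (hFk_summable k)
    have hzero : ∑ i ∈ Finset.range k, F k i = 0 := by
      apply Finset.sum_eq_zero
      intro i hi
      simp only [Finset.mem_range] at hi
      simp [hF_def, not_le.mpr hi]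
    rw [hzero, zero_add] at h
    rw [← h]
    apply tsum_congr
    intro i
    simp [hF_def, Nat.le_add_left k i]
  calc ∑' k, f k * NBcdf k p x
      = ∑' k, ∑' i, F k i := tsum_congr hterm
    _ = ∑' i, ∑' k, F k i := (Summable.tsum_comm hFsum).symm
    _ = ∑' i, (∑ k ∈ Finset.range (i + 1), f k) * nb (x + 1) (1 - p) i := by
        apply tsum_congr
        intro i
        have hsupp : ∀ k ∉ Finset.range (i + 1), F k i = 0 := by
          intro k hk
          simp only [Finset.mem_range] at hk
          simp [hF_def, show ¬ k ≤ i by omega]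
        rw [tsum_eq_sum hsupp, show nb (x + 1) (1 - p) i = g i from rfl, Finset.sum_mul]
        apply Finset.sum_congr rfl
        intro k hk
        simp only [Finset.mem_range] at hk
        simp [hF_def, show k ≤ i by omega]
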